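/- Conversely, in the MVNP-to-WSP reduction, if an allocation Λ in the constructed graph Ĝ satisfies that at most |V| − 1 vertices have delayed arrival time less than h, then for S = P^Λ ∩ V, the shortest s–t path in G \ S has cost at least h. -/

import Mathlib

open scoped ENNReal

/-- `l` is a directed path from `u` to `v` along arc relation `A`. -/
def IsPathFrom {V : Type*} (A : V → V → Prop) (u v : V) (l : List V) : Prop :=
  l.head? = some u ∧ l.getLast? = some v ∧ l.Chain' A

/-- Total cost of a path: sum of arc costs over consecutive pairs. -/
def pathCost {V : Type*} (c : V → V → ℝ) (l : List V) : ℝ :=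
  ((l.zip l.tail).map fun p => c p.1 p.2).sum

/-- Shortest-path distance from `u` to `v` (infimum of path costs, `⊤` if unreachable). -/
noncomputable def gdist {V : Type*} (A : V → V → Prop) (c : V → V → ℝ) (u v : V) : ℝ≥0∞ :=
  ⨅ l : {l : List V // IsPathFrom A u v l}, ENNReal.ofReal (pathCost c l)

open Classical in
/-- Arc costs after protecting the vertices of `P`: every outgoing arc of a
protected vertex is delayed by `Δ`. -/
noncomputable def delCost {V : Type*} (c : V → V → ℝ) (P : Set V) (Δ : ℝ) : V → V → ℝ :=
  fun u v => c u v + (if u ∈ P then Δ else 0)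

/-- Arc relation of the graph `Ĝ` of the MVNP-to-WSP reduction: the sink `t` is
replaced, for each predecessor `v` of `t` lying on an `s`–`t` path of cost `< h`,
by `|V|` leaf vertices `Sum.inr (v, i)` (`i : V`), each reached from `v` by an arc
of cost `t_{vt}`. -/
noncomputable def hatArc {V : Type*} (A : V → V → Prop) (c : V → V → ℝ)
    (s tv : V) (h : ℝ) : (V ⊕ V × V) → (V ⊕ V × V) → Prop
  | Sum.inl x, Sum.inl y => A x y ∧ x ≠ tv ∧ y ≠ tv
  | Sum.inl x, Sum.inr q =>
      x = q.1 ∧ A q.1 tv ∧ gdist A c s q.1 + ENNReal.ofReal (c q.1 tv) < ENNReal.ofReal h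
  | _, _ => False

/-- Arc costs of the reduction graph `Ĝ`. -/
noncomputable def hatCost {V : Type*} (c : V → V → ℝ) (tv : V) :
    (V ⊕ V × V) → (V ⊕ V × V) → ℝ
  | Sum.inl x, Sum.inl y => c x y
  | Sum.inl x, Sum.inr _ => c x tv
  | _, _ => 0

section Helpers

variable {V : Type*}

private lemma pathCost_cons_cons (c : V → V → ℝ) (a b : V) (l : List V) :
    pathCost c (a :: b :: l) = c a b + pathCost c (b :: l) := by
  simp [pathCost]

private lemma pathCost_nonneg (c : V → V → ℝ) (R : V → V → Prop)
    (hnn : ∀ u v, R u v → 0 ≤ c u v) :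
    ∀ l : List V, l.Chain' R → 0 ≤ pathCost c l
  | [], _ => by simp [pathCost]
  | [a], _ => by simp [pathCost]
  | a :: b :: l, hc => by
      simp only [List.Chain', List.isChain_cons_cons] at hc
      rw [pathCost_cons_cons]
      exact add_nonneg (hnn _ _ hc.1) (pathCost_nonneg c R hnn (b :: l) hc.2)

private lemma chain'_imp_mem {R S : V → V → Prop} :
    ∀ l : List V, l.Chain' R → (∀ a ∈ l, ∀ b ∈ l, R a b → S a b) → l.Chain' S
  | [], _, _ => List.isChain_nil
  | [_], _, _ => List.isChain_singleton _
  | a :: b :: l, hc, hmem => by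
      simp only [List.Chain', List.isChain_cons_cons] at hc ⊢
      exact ⟨hmem a (by simp) b (by simp) hc.1,
        chain'_imp_mem (b :: l) hc.2 fun x hx y hy hxy =>
          hmem x (List.mem_cons_of_mem _ hx) y (List.mem_cons_of_mem _ hy) hxy⟩

/-- From a path `l` from `u` to `tv` (with `u ≠ tv`), extract a prefix path `m`
from `u` to the last vertex `q` before the first arrival at `tv`, avoiding `tv`,
with `pathCost m + c q tv ≤ pathCost l`. -/
private lemma extract (R : V → V → Prop) (c : V → V → ℝ)
    (hnn : ∀ u v, R u v → 0 ≤ c u v) (tv : V) :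
    ∀ (l : List V) (u : V), l.Chain' R → l.head? = some u → l.getLast? = some tv →
      u ≠ tv →
      ∃ (m : List V) (q : V), m.Chain' R ∧ m.head? = some u ∧ m.getLast? = some q ∧
        (∀ x ∈ m, x ≠ tv) ∧ (∀ x ∈ m, ∃ y, R x y) ∧ R q tv ∧
        pathCost c m + c q tv ≤ pathCost c l
  | [], u, _, hhd, _, _ => by simp at hhd
  | [a], u, _, hhd, hlast, hne => by
      simp only [List.head?_cons, Option.some.injEq] at hhd
      simp only [List.getLast?_singleton, Option.some.injEq] at hlast
      exact absurd (hhd.symm.trans hlast) hne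
  | a :: b :: l, u, hc, hhd, hlast, hne => by
      have hau : a = u := by simpa using hhd
      simp only [List.Chain', List.isChain_cons_cons] at hc
      have hub : R u b := hau ▸ hc.1
      by_cases hb : b = tv
      · have hutv : R u tv := hb ▸ hub
        refine ⟨[u], u, List.isChain_singleton _, rfl, rfl, ?_, ?_, hutv, ?_⟩
        · intro x hx
          simp only [List.mem_singleton] at hx
          subst hx; exact hne
        · intro x hx
          simp only [List.mem_singleton] at hx
          subst hx; exact ⟨tv, hutv⟩
        · have h0 : pathCost c [u] = 0 := by simp [pathCost]
          rw [pathCost_cons_cons, h0, zero_add, hau, hb]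
          exact le_add_of_nonneg_right (pathCost_nonneg c R hnn _ (hb ▸ hc.2))
      · have hlast' : (b :: l).getLast? = some tv := by
          rwa [List.getLast?_cons_cons] at hlast
        obtain ⟨m, q, hmch, hmh, hml, hmtv, hmsrc, hqtv, hcle⟩ :=
          extract R c hnn tv (b :: l) b hc.2 rfl hlast' hb
        cases m with
        | nil => simp at hmh
        | cons b' m' =>
          have hb'b : b' = b := by simpa using hmh
          rw [hb'b] at hmch hml hmtv hmsrc hcle
          refine ⟨u :: b :: m', q, ?_, rfl, ?_, ?_, ?_, hqtv, ?_⟩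
          · simp only [List.Chain', List.isChain_cons_cons]; exact ⟨hub, hmch⟩
          · rwa [List.getLast?_cons_cons]
          · intro x hx
            rcases List.mem_cons.mp hx with rfl | hx
            · exact hne
            · exact hmtv x hx
          · intro x hx
            rcases List.mem_cons.mp hx with rfl | hx
            · exact ⟨b, hub⟩
            · exact hmsrc x hx
          · rw [pathCost_cons_cons, pathCost_cons_cons c a b l, add_assoc, hau]
            exact add_le_add_right hcle _

/-- Lift the cost of a path `m` (avoiding protection) followed by a leaf arc. -/
private lemma cost_lift (t : V → V → ℝ) (tv : V) (Phat : Set (V ⊕ V × V)) (h : ℝ)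
    (p : V × V) :
    ∀ (m : List V) (q : V), m.getLast? = some q → (∀ x ∈ m, Sum.inl x ∉ Phat) →
      pathCost (delCost (hatCost t tv) Phat h) (m.map Sum.inl ++ [Sum.inr p]) =
        pathCost t m + t q tv
  | [], q, hlast, _ => by simp at hlast
  | [a], q, hlast, hmem => by
      have haq : a = q := by simpa using hlast
      rw [← haq]
      simp [pathCost, delCost, hatCost, hmem a (by simp)]
  | a :: b :: m, q, hlast, hmem => by
      rw [List.getLast?_cons_cons] at hlast
      have ih := cost_lift t tv Phat h p (b :: m) q hlast
        (fun x hx => hmem x (List.mem_cons_of_mem _ hx))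
      simp only [List.map_cons, List.cons_append] at ih ⊢
      rw [pathCost_cons_cons, ih, pathCost_cons_cons, add_assoc]
      congr 1
      simp [delCost, hatCost, hmem a (by simp)]

end Helpers

/-- conversely, if an allocation with protected set `P̂` in the
reduction graph `Ĝ` burns at most `|V| - 1` vertices before time `h`, then for
`S = P̂ ∩ V` the shortest `s`–`t` path in `G \ S` has cost at least `h`. -/
theorem reduction_converse {V : Type*} [Fintype V] (A : V → V → Prop)
    (t : V → V → ℝ) (hpos : ∀ u v, A u v → 0 < t u v)
    (s tv : V) (hstv : s ≠ tv) (h : ℝ) (hh : 0 < h)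
    (Phat : Set (V ⊕ V × V))
    (hburn : Set.ncard {x : V ⊕ V × V |
        gdist (hatArc A t s tv h) (delCost (hatCost t tv) Phat h) (Sum.inl s) x <
          ENNReal.ofReal h} ≤ Fintype.card V - 1) :
    ENNReal.ofReal h ≤
      gdist (fun u v => A u v ∧ u ∉ {w : V | Sum.inl w ∈ Phat} ∧
          v ∉ {w : V | Sum.inl w ∈ Phat}) t s tv := by
  classical
  by_contra hle
  have hlt := lt_of_not_ge hle
  set S : Set V := {w : V | Sum.inl w ∈ Phat} with hS
  set A' : V → V → Prop := fun u v => A u v ∧ u ∉ S ∧ v ∉ S with hA'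
  rw [gdist, iInf_lt_iff] at hlt
  obtain ⟨⟨l, hhead, hlast, hchain⟩, hcost⟩ := hlt
  have hnn : ∀ u v, A' u v → 0 ≤ t u v := fun u v hv => (hpos u v hv.1).le
  obtain ⟨m, q, hmch, hmh, hml, hmtv, hmsrc, hqtv, hcle⟩ :=
    extract A' t hnn tv l s hchain hhead hlast hstv
  have hm_nonneg : 0 ≤ pathCost t m := pathCost_nonneg t A' hnn m hmch
  have hq_nonneg : 0 ≤ t q tv := hnn _ _ hqtv
  have key : ENNReal.ofReal (pathCost t m) + ENNReal.ofReal (t q tv) <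
      ENNReal.ofReal h := by
    rw [← ENNReal.ofReal_add hm_nonneg hq_nonneg]
    exact lt_of_le_of_lt (ENNReal.ofReal_le_ofReal hcle) hcost
  have hgd : gdist A t s q ≤ ENNReal.ofReal (pathCost t m) :=
    iInf_le _ (⟨m, hmh, hml, List.IsChain.imp (fun _ _ hab => hab.1) hmch⟩ :
      {l : List V // IsPathFrom A s q l})
  have harc : gdist A t s q + ENNReal.ofReal (t q tv) < ENNReal.ofReal h :=
    lt_of_le_of_lt (add_le_add_left hgd _) key
  have hmP : ∀ x ∈ m, Sum.inl x ∉ Phat := fun x hx => by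
    obtain ⟨y, hy⟩ := hmsrc x hx
    exact hy.2.1
  -- all |V| leaves over q burn before time h
  have hburnleaf : ∀ i : V,
      gdist (hatArc A t s tv h) (delCost (hatCost t tv) Phat h) (Sum.inl s)
        (Sum.inr (q, i)) < ENNReal.ofReal h := by
    intro i
    have hpath : IsPathFrom (hatArc A t s tv h) (Sum.inl s) (Sum.inr (q, i))
        (m.map Sum.inl ++ [Sum.inr (q, i)]) := by
      refine ⟨?_, List.getLast?_concat, ?_⟩
      · cases m with
        | nil => simp at hmh
        | cons a m' =>
          simp only [List.head?_cons, Option.some.injEq] at hmh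
          subst hmh; rfl
      · simp only [List.Chain', List.isChain_append]
        refine ⟨?_, List.isChain_singleton _, ?_⟩
        · rw [List.isChain_map]
          exact chain'_imp_mem m hmch fun a ha b hb hab =>
            show hatArc A t s tv h (Sum.inl a) (Sum.inl b) from
              ⟨hab.1, hmtv a ha, hmtv b hb⟩
        · intro x hx y hy
          rw [List.getLast?_map, hml, Option.map_some] at hx
          simp only [Option.mem_def, Option.some.injEq] at hx
          simp only [List.head?_cons, Option.mem_def, Option.some.injEq] at hy
          subst hx; subst hy
          exact show hatArc A t s tv h (Sum.inl q) (Sum.inr (q, i)) from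
            ⟨rfl, hqtv.1, harc⟩
    have hcosteq := cost_lift t tv Phat h (q, i) m q hml hmP
    calc gdist (hatArc A t s tv h) (delCost (hatCost t tv) Phat h) (Sum.inl s)
          (Sum.inr (q, i))
        ≤ ENNReal.ofReal (pathCost (delCost (hatCost t tv) Phat h)
            (m.map Sum.inl ++ [Sum.inr (q, i)])) := iInf_le _ (⟨_, hpath⟩ : {l : List (V ⊕ V × V) //
              IsPathFrom (hatArc A t s tv h) (Sum.inl s) (Sum.inr (q, i)) l})
      _ = ENNReal.ofReal (pathCost t m) + ENNReal.ofReal (t q tv) := by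
            rw [hcosteq, ENNReal.ofReal_add hm_nonneg hq_nonneg]
      _ < ENNReal.ofReal h := key
  -- counting: the |V| leaves give |V| burned vertices
  have hinj : Function.Injective (fun i : V => (Sum.inr (q, i) : V ⊕ V × V)) :=
    fun a b hab => by simpa using hab
  have hsub : Set.range (fun i : V => (Sum.inr (q, i) : V ⊕ V × V)) ⊆
      {x : V ⊕ V × V |
        gdist (hatArc A t s tv h) (delCost (hatCost t tv) Phat h) (Sum.inl s) x <
          ENNReal.ofReal h} := by
    rintro _ ⟨i, rfl⟩
    exact hburnleaf i
  have hcard : Fintype.card V ≤ Set.ncard {x : V ⊕ V × V |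
      gdist (hatArc A t s tv h) (delCost (hatCost t tv) Phat h) (Sum.inl s) x <
        ENNReal.ofReal h} := by
    have h1 : (Set.range (fun i : V => (Sum.inr (q, i) : V ⊕ V × V))).ncard =
        Fintype.card V := by
      rw [← Nat.card_coe_set_eq, Nat.card_range_of_injective hinj,
        Nat.card_eq_fintype_card]
    rw [← h1]
    exact Set.ncard_le_ncard hsub (Set.toFinite _)
  have hVpos : 0 < Fintype.card V := Fintype.card_pos_iff.mpr ⟨s⟩
  omega
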